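/- Let f : ℂ → ℂ^N be holomorphic and nonvanishing, and f₁ = P₊f = ∂f − f (f†∂f)/(f†f) assumed nonvanishing. Then ∂̄f₁ = −(|f₁|²/|f|²) f, i.e. ∂(P₊f)† = −(|f₁|²/|f|²) f†. -/

import Mathlib

open Matrix Complex BigOperators

/-- Wirtinger derivative ∂ of a scalar function. -/
noncomputable def wd (g : ℂ → ℂ) (z : ℂ) : ℂ :=
  (fderiv ℝ g z 1 - Complex.I * fderiv ℝ g z Complex.I) / 2

/-- Wirtinger derivative ∂̄ of a scalar function. -/
noncomputable def wdbar (g : ℂ → ℂ) (z : ℂ) : ℂ :=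
  (fderiv ℝ g z 1 + Complex.I * fderiv ℝ g z Complex.I) / 2

/-- Componentwise ∂ of a vector-valued function. -/
noncomputable def wdv {N : ℕ} (f : ℂ → Fin N → ℂ) (z : ℂ) : Fin N → ℂ :=
  fun i => wd (fun w => f w i) z

/-- Componentwise ∂̄ of a vector-valued function. -/
noncomputable def wdbarv {N : ℕ} (f : ℂ → Fin N → ℂ) (z : ℂ) : Fin N → ℂ :=
  fun i => wdbar (fun w => f w i) z

/-- Entrywise ∂ of a matrix-valued function. -/
noncomputable def wdm {N : ℕ} (P : ℂ → Matrix (Fin N) (Fin N) ℂ) (z : ℂ) :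
    Matrix (Fin N) (Fin N) ℂ :=
  Matrix.of fun i j => wd (fun w => P w i j) z

/-- Entrywise ∂̄ of a matrix-valued function. -/
noncomputable def wdbarm {N : ℕ} (P : ℂ → Matrix (Fin N) (Fin N) ℂ) (z : ℂ) :
    Matrix (Fin N) (Fin N) ℂ :=
  Matrix.of fun i j => wdbar (fun w => P w i j) z

/-- The rank-1 projector P = (f ⊗ f†)/(f† f). -/
noncomputable def proj {N : ℕ} (f : Fin N → ℂ) : Matrix (Fin N) (Fin N) ℂ :=
  (star f ⬝ᵥ f)⁻¹ • Matrix.vecMulVec f (star f)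

/-- P₊(f, g) = g − f (f† g)/(f† f). -/
noncomputable def Pplus {N : ℕ} (f g : Fin N → ℂ) : Fin N → ℂ :=
  g - ((star f ⬝ᵥ g) / (star f ⬝ᵥ f)) • f

/-- fⱼ = P₊ʲ f, built from a map f : ℂ → ℂᴺ using the Wirtinger ∂. -/
noncomputable def Fseq {N : ℕ} (f : ℂ → Fin N → ℂ) : ℕ → ℂ → Fin N → ℂ
  | 0 => f
  | (j + 1) => fun z => Pplus (Fseq f j z) (wdv (Fseq f j) z)

open ComplexConjugate

lemma fderiv_real_of_holo {g : ℂ → ℂ} {z : ℂ} (hg : DifferentiableAt ℂ g z) (v : ℂ) :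
    fderiv ℝ g z v = v * deriv g z := by
  rw [hg.fderiv_restrictScalars ℝ]
  show fderiv ℂ g z v = v * deriv g z
  have h1 : (fderiv ℂ g z) v = (fderiv ℂ g z) (v • (1:ℂ)) := by norm_num
  rw [h1, (fderiv ℂ g z).map_smul, smul_eq_mul, deriv]

lemma wdbar_of_holo {g : ℂ → ℂ} {z : ℂ} (hg : DifferentiableAt ℂ g z) : wdbar g z = 0 := by
  simp only [wdbar, fderiv_real_of_holo hg]
  have : Complex.I * (Complex.I * deriv g z) = -deriv g z := by
    rw [← mul_assoc, Complex.I_mul_I]; ring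
  rw [this]; ring

lemma wd_of_holo {g : ℂ → ℂ} {z : ℂ} (hg : DifferentiableAt ℂ g z) : wd g z = deriv g z := by
  simp only [wd, fderiv_real_of_holo hg]
  have : Complex.I * (Complex.I * deriv g z) = -deriv g z := by
    rw [← mul_assoc, Complex.I_mul_I]; ring
  rw [this]; ring

lemma fderiv_real_conj {g : ℂ → ℂ} {z : ℂ} (hg : DifferentiableAt ℝ g z) (v : ℂ) :
    fderiv ℝ (fun w => conj (g w)) z v = conj (fderiv ℝ g z v) := by
  have h := hg.hasFDerivAt.star.fderiv
  rw [show (fun w => conj (g w)) = (fun w => star (g w)) from rfl, h]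
  simp

lemma wdbar_conj_of_holo {g : ℂ → ℂ} {z : ℂ} (hg : DifferentiableAt ℂ g z) :
    wdbar (fun w => conj (g w)) z = conj (deriv g z) := by
  simp only [wdbar, fderiv_real_conj (hg.restrictScalars ℝ), fderiv_real_of_holo hg]
  simp only [RingHom.map_mul, Complex.conj_I]
  have : Complex.I * (-Complex.I * conj (deriv g z)) = conj (deriv g z) := by
    rw [← mul_assoc]; simp [Complex.I_mul_I]
  rw [this]
  rw [RingHom.map_one]
  ring

lemma wdbar_sub {g h : ℂ → ℂ} {z : ℂ} (hg : DifferentiableAt ℝ g z)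
    (hh : DifferentiableAt ℝ h z) :
    wdbar (fun w => g w - h w) z = wdbar g z - wdbar h z := by
  simp only [wdbar, fderiv_fun_sub hg hh, ContinuousLinearMap.sub_apply]; ring

lemma wdbar_mul {g h : ℂ → ℂ} {z : ℂ} (hg : DifferentiableAt ℝ g z)
    (hh : DifferentiableAt ℝ h z) :
    wdbar (fun w => g w * h w) z = wdbar g z * h z + g z * wdbar h z := by
  simp only [wdbar, fderiv_fun_mul hg hh, ContinuousLinearMap.add_apply,
    ContinuousLinearMap.smul_apply, smul_eq_mul]; ring

lemma wdbar_inv {g : ℂ → ℂ} {z : ℂ} (hg : DifferentiableAt ℝ g z) (h0 : g z ≠ 0) :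
    wdbar (fun w => (g w)⁻¹) z = -wdbar g z / (g z) ^ 2 := by
  have hc : fderiv ℝ (fun w => (g w)⁻¹) z =
      (fderiv ℝ Inv.inv (g z)).comp (fderiv ℝ g z) :=
    (fderiv_comp z (differentiableAt_inv h0) hg)
  simp only [wdbar, hc, fderiv_inv' h0, ContinuousLinearMap.comp_apply,
    ContinuousLinearMap.neg_apply, ContinuousLinearMap.mulLeftRight_apply]
  field_simp
  ring

lemma wdbar_sum {ι : Type*} (s : Finset ι) {F : ι → ℂ → ℂ} {z : ℂ}
    (hF : ∀ i ∈ s, DifferentiableAt ℝ (F i) z) :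
    wdbar (fun w => ∑ i ∈ s, F i w) z = ∑ i ∈ s, wdbar (F i) z := by
  simp only [wdbar, fderiv_fun_sum hF, ContinuousLinearMap.sum_apply]
  rw [Finset.mul_sum, ← Finset.sum_add_distrib, Finset.sum_div]

/-- for holomorphic nonvanishing f with f₁ = P₊f nonvanishing,
∂̄f₁ = −(|f₁|²/|f|²) f. -/
theorem stmt_11 {N : ℕ} (f : ℂ → Fin N → ℂ)
    (hhol : ∀ i, Differentiable ℂ (fun z => f z i))
    (hnv : ∀ z, f z ≠ 0)
    (hnv1 : ∀ z, Pplus (f z) (wdv f z) ≠ 0) (ξ : ℂ) :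
    wdbarv (fun z => Pplus (f z) (wdv f z)) ξ =
      -((star (Pplus (f ξ) (wdv f ξ)) ⬝ᵥ Pplus (f ξ) (wdv f ξ)) /
          (star (f ξ) ⬝ᵥ f ξ)) • f ξ := by
  classical
  set g' : Fin N → ℂ → ℂ := fun i => deriv (fun z => f z i) with hg'def
  have hg'hol : ∀ i, Differentiable ℂ (g' i) := by
    intro i
    have hA : AnalyticOnNhd ℂ (fun z => f z i) Set.univ :=
      fun z _ => (hhol i).analyticAt z
    intro z
    exact ((hA.deriv z trivial)).differentiableAt
  have hwdv : ∀ z, wdv f z = fun i => g' i z := by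
    intro z; funext i; exact wd_of_holo ((hhol i) z)
  set A : ℂ → ℂ := fun z => ∑ k, conj (f z k) * f z k with hAdef
  set B : ℂ → ℂ := fun z => ∑ k, conj (f z k) * g' k z with hBdef
  have hdotA : ∀ z, star (f z) ⬝ᵥ f z = A z := by
    intro z; simp [dotProduct, hAdef, Complex.star_def]
  have hdotB : ∀ z, (star (f z) ⬝ᵥ fun i => g' i z) = B z := by
    intro z; simp [dotProduct, hBdef, Complex.star_def]
  have hA0 : ∀ z, A z ≠ 0 := by
    intro z h
    apply hnv z
    have h1 : A z = ((∑ k, Complex.normSq (f z k) : ℝ) : ℂ) := by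
      rw [hAdef]
      push_cast
      exact Finset.sum_congr rfl fun k _ => (Complex.normSq_eq_conj_mul_self).symm
    have h2 : ∑ k, Complex.normSq (f z k) = 0 := by
      exact_mod_cast h1 ▸ h
    have h3 := (Finset.sum_eq_zero_iff_of_nonneg
      (fun k _ => Complex.normSq_nonneg (f z k))).mp h2
    funext k
    exact Complex.normSq_eq_zero.mp (h3 k (Finset.mem_univ k))
  -- differentiability facts
  have hgR : ∀ i z, DifferentiableAt ℝ (fun w => f w i) z := fun i z =>
    ((hhol i) z).restrictScalars ℝ
  have hcgR : ∀ i z, DifferentiableAt ℝ (fun w => conj (f w i)) z := fun i z =>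
    (hgR i z).star
  have hg'R : ∀ i z, DifferentiableAt ℝ (g' i) z := fun i z =>
    ((hg'hol i) z).restrictScalars ℝ
  have hAR : ∀ z, DifferentiableAt ℝ A z := fun z =>
    DifferentiableAt.fun_sum (fun k _ => (hcgR k z).mul (hgR k z))
  have hBR : ∀ z, DifferentiableAt ℝ B z := fun z =>
    DifferentiableAt.fun_sum (fun k _ => (hcgR k z).mul (hg'R k z))
  -- components of f₁
  have hcomp : ∀ i, (fun z => Pplus (f z) (wdv f z) i)
      = fun z => g' i z - (B z * (A z)⁻¹) * f z i := by
    intro i; funext z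
    simp only [Pplus, Pi.sub_apply, Pi.smul_apply, smul_eq_mul, hwdv z, hdotA z, hdotB z,
      div_eq_mul_inv]
  -- wdbar of A and B
  have hwdbarA : wdbar A ξ = ∑ k, conj (g' k ξ) * f ξ k := by
    rw [hAdef, wdbar_sum (F := fun k w => conj (f w k) * f w k) Finset.univ (fun k _ => (hcgR k ξ).mul (hgR k ξ))]
    refine Finset.sum_congr rfl fun k _ => ?_
    rw [wdbar_mul (hcgR k ξ) (hgR k ξ), wdbar_conj_of_holo ((hhol k) ξ),
      wdbar_of_holo ((hhol k) ξ)]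
    ring
  have hwdbarB : wdbar B ξ = ∑ k, conj (g' k ξ) * g' k ξ := by
    rw [hBdef, wdbar_sum (F := fun k w => conj (f w k) * g' k w) Finset.univ (fun k _ => (hcgR k ξ).mul (hg'R k ξ))]
    refine Finset.sum_congr rfl fun k _ => ?_
    rw [wdbar_mul (hcgR k ξ) (hg'R k ξ), wdbar_conj_of_holo ((hhol k) ξ),
      wdbar_of_holo ((hg'hol k) ξ)]
    ring
  set C : ℂ := ∑ k, conj (g' k ξ) * g' k ξ with hCdef
  set E : ℂ := ∑ k, conj (g' k ξ) * f ξ k with hEdef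
  set a : ℂ := A ξ
  set b : ℂ := B ξ
  have ha0 : a ≠ 0 := hA0 ξ
  -- conjugation identities
  have hconja : conj a = a := by
    show conj (A ξ) = A ξ
    rw [hAdef]
    rw [_root_.map_sum]
    exact Finset.sum_congr rfl fun k _ => by
      rw [_root_.map_mul, Complex.conj_conj, mul_comm]
  have hconjb : conj b = E := by
    show conj (B ξ) = E
    rw [hBdef, hEdef]
    rw [_root_.map_sum]
    exact Finset.sum_congr rfl fun k _ => by
      rw [_root_.map_mul, Complex.conj_conj, mul_comm]
  -- key identity
  have key : star (Pplus (f ξ) (wdv f ξ)) ⬝ᵥ Pplus (f ξ) (wdv f ξ) = C - b * E / a := by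
    have h1 : ∀ k, Pplus (f ξ) (wdv f ξ) k = g' k ξ - (b / a) * f ξ k := by
      intro k
      have := congrFun (hcomp k) ξ
      simpa [div_eq_mul_inv] using this
    have h2 : star (Pplus (f ξ) (wdv f ξ)) ⬝ᵥ Pplus (f ξ) (wdv f ξ)
        = ∑ k, conj (Pplus (f ξ) (wdv f ξ) k) * Pplus (f ξ) (wdv f ξ) k := by
      simp [dotProduct, Complex.star_def]
    rw [h2]
    have h3 : ∀ k, conj (Pplus (f ξ) (wdv f ξ) k) * Pplus (f ξ) (wdv f ξ) k
        = conj (g' k ξ) * g' k ξ - (b/a) * (conj (g' k ξ) * f ξ k)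
          - (E/a) * (conj (f ξ k) * g' k ξ) + (E*b/a^2) * (conj (f ξ k) * f ξ k) := by
      intro k
      rw [h1 k, _root_.map_sub, _root_.map_mul, map_div₀, hconja, hconjb]
      field_simp
      ring
    rw [Finset.sum_congr rfl fun k _ => h3 k]
    rw [Finset.sum_add_distrib, Finset.sum_sub_distrib, Finset.sum_sub_distrib,
      ← Finset.mul_sum, ← Finset.mul_sum, ← Finset.mul_sum]
    have e1 : (∑ k, conj (f ξ k) * g' k ξ) = b := rfl
    have e2 : (∑ k, conj (f ξ k) * f ξ k) = a := rfl
    have e3 : (∑ k, conj (g' k ξ) * g' k ξ) = C := rfl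
    have e4 : (∑ k, conj (g' k ξ) * f ξ k) = E := rfl
    rw [e1, e2, e3, e4]
    field_simp
    ring
  -- main computation
  funext i
  show wdbar (fun z => Pplus (f z) (wdv f z) i) ξ = _
  rw [hcomp i]
  have hq : DifferentiableAt ℝ (fun z => B z * (A z)⁻¹) ξ :=
    (hBR ξ).mul ((hAR ξ).inv ha0)
  have step1 : wdbar (fun z => g' i z - (B z * (A z)⁻¹) * f z i) ξ
      = wdbar (g' i) ξ - wdbar (fun z => (B z * (A z)⁻¹) * f z i) ξ :=
    wdbar_sub (hg'R i ξ) (hq.mul (hgR i ξ))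
  have step2 : wdbar (fun z => (B z * (A z)⁻¹) * f z i) ξ
      = wdbar (fun z => B z * (A z)⁻¹) ξ * f ξ i
        + (B ξ * (A ξ)⁻¹) * wdbar (fun w => f w i) ξ :=
    wdbar_mul hq (hgR i ξ)
  have step3 : wdbar (fun z => B z * (A z)⁻¹) ξ
      = wdbar B ξ * (A ξ)⁻¹ + B ξ * wdbar (fun z => (A z)⁻¹) ξ :=
    wdbar_mul (hBR ξ) ((hAR ξ).inv ha0)
  have step4 : wdbar (fun z => (A z)⁻¹) ξ = -wdbar A ξ / (A ξ)^2 :=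
    wdbar_inv (hAR ξ) ha0
  rw [step1, step2, step3, step4, wdbar_of_holo ((hg'hol i) ξ),
    wdbar_of_holo ((hhol i) ξ), hwdbarA, hwdbarB]
  simp only [Pi.smul_apply, smul_eq_mul, key, hdotA ξ]
  show (0:ℂ) - ((C * a⁻¹ + b * (-E / a ^ 2)) * f ξ i + b * a⁻¹ * 0)
      = -((C - b * E / a) / a) * f ξ i
  field_simp
  ring
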